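/- arXiv:1412.2283 — 6 statements merged into one kernel-verified Lean document; each statement's English description precedes it below -/
import Mathlib

section
/- Let H be an inert subnormal subgroup of a group G and let K be a subgroup of G with |K : H ∩ K| finite. Then |⟨H, K⟩ : H| is finite. -/
variable {G : Type*} [Group G]

/-- The conjugate subgroup `H^g = gHg⁻¹`. -/
def conjS (g : G) (H : Subgroup G) : Subgroup G :=
  H.map (MulAut.conj g).toMonoidHom

/-- `H` is inert in `G` if `|H : H ∩ H^g|` is finite for all `g`. -/
def Inert (H : Subgroup G) : Prop :=
  ∀ g : G, (conjS g H).relIndex H ≠ 0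

/-- `H` is strongly inert if `|⟨H, H^g⟩ : H|` is finite for all `g`. -/
def StronglyInert (H : Subgroup G) : Prop :=
  ∀ g : G, H.relIndex (H ⊔ conjS g H) ≠ 0

/-- `c` is a chain of successive normal inclusions of length `n`. -/
def SubnormalChain (c : ℕ → Subgroup G) (n : ℕ) : Prop :=
  ∀ i < n, c i ≤ c (i + 1) ∧ ∀ x ∈ c (i + 1), ∀ h ∈ c i, x * h * x⁻¹ ∈ c i

/-- `H` is subnormal in `G`. -/
def Subnormal (H : Subgroup G) : Prop :=
  ∃ n : ℕ, ∃ c : ℕ → Subgroup G, c 0 = H ∧ c n = ⊤ ∧ SubnormalChain c n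

section Aux

lemma mem_conjS {g x : G} {H : Subgroup G} : x ∈ conjS g H ↔ g⁻¹ * x * g ∈ H := by
  constructor
  · rintro ⟨h, hh, rfl⟩
    simpa [MulAut.conj_apply, mul_assoc] using hh
  · intro h
    exact ⟨g⁻¹ * x * g, h, by simp [MulAut.conj_apply]; group⟩

lemma conjS_conjS (a b : G) (H : Subgroup G) : conjS a (conjS b H) = conjS (a * b) H := by
  ext x
  simp only [mem_conjS]
  have e : b⁻¹ * (a⁻¹ * x * a) * b = (a * b)⁻¹ * x * (a * b) := by group
  rw [e]

lemma conjS_one (H : Subgroup G) : conjS (1 : G) H = H := by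
  ext x; simp [mem_conjS]

lemma conjS_mono (g : G) {A B : Subgroup G} (h : A ≤ B) : conjS g A ≤ conjS g B :=
  Subgroup.map_mono h

lemma conjS_inv_conjS (g : G) (H : Subgroup G) : conjS g (conjS g⁻¹ H) = H := by
  rw [conjS_conjS]; simp [conjS_one]

lemma conjS_eq_self_of_mem {h : G} {H : Subgroup G} (hh : h ∈ H) : conjS h H = H := by
  ext x
  simp only [mem_conjS]
  constructor
  · intro hx
    have := mul_mem (mul_mem hh hx) (inv_mem hh)
    simpa [mul_assoc] using this
  · intro hx
    exact mul_mem (mul_mem (inv_mem hh) hx) hh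

lemma conjS_mul_right_mem (s : G) {u : G} {H : Subgroup G} (hu : u ∈ H) :
    conjS (s * u) H = conjS s H := by
  rw [← conjS_conjS, conjS_eq_self_of_mem hu]

lemma conjS_eq_comap (g : G) (H : Subgroup G) :
    conjS g H = H.comap (MulAut.conj g⁻¹).toMonoidHom := by
  ext x
  simp [mem_conjS, Subgroup.mem_comap, MulAut.conj_apply]

lemma relindex_conjS (g : G) (A B : Subgroup G) :
    (conjS g A).relIndex (conjS g B) = A.relIndex B := by
  rw [conjS_eq_comap g A, Subgroup.relIndex_comap]
  congr 1
  show conjS g⁻¹ (conjS g B) = B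
  rw [conjS_conjS]; simp [conjS_one]

lemma inert_conjS {H : Subgroup G} (hin : Inert H) (g : G) : Inert (conjS g H) := by
  intro x
  rw [conjS_conjS]
  have h1 : x * g = g * (g⁻¹ * x * g) := by group
  rw [h1, ← conjS_conjS g, relindex_conjS]
  exact hin _

lemma inert_symm {H : Subgroup G} (hin : Inert H) (g : G) :
    H.relIndex (conjS g H) ≠ 0 := by
  have h := hin g⁻¹
  have h2 := relindex_conjS g (conjS g⁻¹ H) H
  rw [conjS_inv_conjS] at h2
  rw [h2]; exact h

lemma chain_mono {c : ℕ → Subgroup G} {n : ℕ} (hc : SubnormalChain c n) :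
    ∀ {i j}, i ≤ j → j ≤ n → c i ≤ c j := by
  intro i j hij hjn
  induction j with
  | zero =>
    have : i = 0 := Nat.le_zero.mp hij
    subst this; exact le_rfl
  | succ j IH =>
    rcases Nat.lt_or_ge i (j + 1) with h | h
    · have hij' : i ≤ j := Nat.lt_succ_iff.mp h
      exact (IH hij' (le_trans (Nat.le_succ j) hjn)).trans
        (hc j (Nat.lt_of_lt_of_le (Nat.lt_succ_self j) hjn)).1
    · have : i = j + 1 := le_antisymm hij h
      subst this; exact le_rfl

lemma exists_mul_of_mem_sup {M K : Subgroup G}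
    (hN : ∀ k ∈ K, ∀ m ∈ M, k * m * k⁻¹ ∈ M) :
    ∀ x ∈ M ⊔ K, ∃ k ∈ K, ∃ m ∈ M, x = k * m := by
  intro x hx
  rw [Subgroup.sup_eq_closure] at hx
  induction hx using Subgroup.closure_induction with
  | mem y hy =>
    rcases hy with hy | hy
    · exact ⟨1, one_mem _, y, hy, (one_mul y).symm⟩
    · exact ⟨y, hy, 1, one_mem _, (mul_one y).symm⟩
  | one => exact ⟨1, one_mem _, 1, one_mem _, (mul_one 1).symm⟩
  | mul a b _ _ ha hb =>
    obtain ⟨k1, hk1, m1, hm1, rfl⟩ := ha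
    obtain ⟨k2, hk2, m2, hm2, rfl⟩ := hb
    refine ⟨k1 * k2, mul_mem hk1 hk2, (k2⁻¹ * m1 * k2) * m2, mul_mem ?_ hm2, by group⟩
    have := hN k2⁻¹ (inv_mem hk2) m1 hm1
    simpa using this
  | inv a _ ha =>
    obtain ⟨k, hk, m, hm, rfl⟩ := ha
    exact ⟨k⁻¹, inv_mem hk, k * m⁻¹ * k⁻¹, hN k hk m⁻¹ (inv_mem hm), by group⟩

lemma key_inert_subnormal : ∀ (n : ℕ) (c : ℕ → Subgroup G) (H K : Subgroup G),
    c 0 = H → SubnormalChain c n → H ⊔ K ≤ c n → Inert H → H.relIndex K ≠ 0 →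
    H.relIndex (H ⊔ K) ≠ 0 := by
  intro n
  induction n with
  | zero =>
    intro c H K h0 _ hle _ _
    have hHK : H ⊔ K = H := le_antisymm (h0 ▸ hle) le_sup_left
    rw [hHK, Subgroup.relIndex_self]
    exact one_ne_zero
  | succ n ih =>
    intro c H K h0 hchain hle hin hK
    classical
    have hchain' : SubnormalChain c n := fun i hi => hchain i (Nat.lt_succ_of_lt hi)
    have hH_le_cn : H ≤ c n := h0 ▸ chain_mono hchain (Nat.zero_le n) (Nat.le_succ n)
    have hK_le : K ≤ c (n + 1) := le_trans le_sup_right hle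
    have hnorm : ∀ x ∈ c (n + 1), conjS x (c n) ≤ c n := by
      intro x hx y hy
      have := (hchain n (Nat.lt_succ_self n)).2 x hx (x⁻¹ * y * x) (mem_conjS.mp hy)
      simpa [mul_assoc] using this
    -- finite quotient of K by H ∩ K
    have hQfin : Finite (K ⧸ H.subgroupOf K) := by
      apply Nat.finite_of_card_ne_zero
      rw [← Subgroup.index_eq_card]
      exact hK
    set Q := K ⧸ H.subgroupOf K with hQdef
    let r : Q → G := fun q => ((Quotient.out q : K) : G)
    have hr_mem : ∀ q, r q ∈ K := fun q => (Quotient.out q).2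
    have hr : ∀ k : K, conjS (k : G) H = conjS (r (QuotientGroup.mk k)) H := by
      intro k
      have h1 : (QuotientGroup.mk (Quotient.out (QuotientGroup.mk k : Q)) : Q)
          = QuotientGroup.mk k := QuotientGroup.out_eq' _
      have h2 : (Quotient.out (QuotientGroup.mk k : Q))⁻¹ * k ∈ H.subgroupOf K :=
        QuotientGroup.eq.mp h1
      have h2' : (r (QuotientGroup.mk k))⁻¹ * (k : G) ∈ H := h2
      have h3 : (k : G) = r (QuotientGroup.mk k) * ((r (QuotientGroup.mk k))⁻¹ * (k : G)) := by
        group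
      rw [h3, conjS_mul_right_mem _ h2']
    set M : Subgroup G := ⨆ k : K, conjS (k : G) H with hMdef
    have hconj_le_M : ∀ k ∈ K, conjS k H ≤ M := fun k hk =>
      le_iSup_of_le (⟨k, hk⟩ : K) le_rfl
    have hHM : H ≤ M := by
      have h1 : conjS ((1 : K) : G) H = H := by
        rw [OneMemClass.coe_one, conjS_one]
      exact h1 ▸ le_iSup (fun k : K => conjS (k : G) H) 1
    have hM_le_sup : M ≤ H ⊔ K := by
      refine iSup_le fun k => ?_
      intro x hx
      rw [mem_conjS] at hx
      have e : x = (k : G) * ((k : G)⁻¹ * x * (k : G)) * (k : G)⁻¹ := by group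
      rw [e]
      exact mul_mem (mul_mem (le_sup_right (α := Subgroup G) k.2)
        ((le_sup_left : H ≤ H ⊔ K) hx)) (inv_mem (le_sup_right (α := Subgroup G) k.2))
    have hMnorm : ∀ k ∈ K, ∀ m ∈ M, k * m * k⁻¹ ∈ M := by
      intro k hk m hm
      have h1 : conjS k M ≤ M := by
        have h2 : conjS k M = ⨆ k' : K, conjS k (conjS (k' : G) H) :=
          Subgroup.map_iSup _ _
        rw [h2]
        refine iSup_le fun k' => ?_
        rw [conjS_conjS]
        exact hconj_le_M _ (mul_mem hk k'.2)
      apply h1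
      rw [mem_conjS]
      simpa [mul_assoc] using hm
    -- finset induction to show H has finite relative index in M
    have main : ∀ s : Finset Q,
        H.relIndex (H ⊔ ⨆ q ∈ s, conjS (r q) H) ≠ 0 ∧
          (H ⊔ ⨆ q ∈ s, conjS (r q) H) ≤ c n := by
      intro s
      induction s using Finset.induction_on with
      | empty =>
        constructor
        · rw [show (⨆ q ∈ (∅ : Finset Q), conjS (r q) H) = ⊥ by simp,
            sup_bot_eq, Subgroup.relIndex_self]
          exact one_ne_zero
        · rw [show (⨆ q ∈ (∅ : Finset Q), conjS (r q) H) = ⊥ by simp, sup_bot_eq]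
          exact hH_le_cn
      | @insert a s ha IH =>
        obtain ⟨IH1, IH2⟩ := IH
        set L := H ⊔ ⨆ q ∈ s, conjS (r q) H with hL
        set g : G := r a with hg
        have hgK : g ∈ K := hr_mem a
        have hgcn1 : g ∈ c (n + 1) := hK_le hgK
        have hfa_le : conjS g H ≤ c n := le_trans (conjS_mono g hH_le_cn) (hnorm g hgcn1)
        have hL_le : L ≤ conjS g (c n) := by
          have h1 : conjS g⁻¹ L ≤ c n :=
            le_trans (conjS_mono _ IH2) (hnorm g⁻¹ (inv_mem hgcn1))
          have h2 := conjS_mono g h1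
          rwa [conjS_inv_conjS] at h2
        have hnew : (H ⊔ ⨆ q ∈ insert a s, conjS (r q) H) = conjS g H ⊔ L := by
          rw [Finset.iSup_insert, hL, ← hg, sup_left_comm]
        have happ : (conjS g H).relIndex (conjS g H ⊔ L) ≠ 0 := by
          refine ih (fun i => conjS g (c i)) (conjS g H) L ?_ ?_ ?_ ?_ ?_
          · show conjS g (c 0) = conjS g H
            rw [h0]
          · intro i hi
            obtain ⟨h1, h2⟩ := hchain i (Nat.lt_succ_of_lt hi)
            refine ⟨conjS_mono g h1, ?_⟩
            intro x hx h hh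
            rw [mem_conjS] at hx hh ⊢
            have e : g⁻¹ * (x * h * x⁻¹) * g
                = (g⁻¹ * x * g) * (g⁻¹ * h * g) * (g⁻¹ * x * g)⁻¹ := by group
            rw [e]
            exact h2 _ hx _ hh
          · exact sup_le (conjS_mono g hH_le_cn) hL_le
          · exact inert_conjS hin g
          · exact Subgroup.relIndex_ne_zero_trans (hin g) IH1
        constructor
        · rw [hnew]
          exact Subgroup.relIndex_ne_zero_trans (inert_symm hin g) happ
        · rw [hnew]
          exact sup_le hfa_le IH2
    haveI : Fintype Q := Fintype.ofFinite Q
    have hM_eq : M = H ⊔ ⨆ q ∈ (Finset.univ : Finset Q), conjS (r q) H := by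
      apply le_antisymm
      · refine iSup_le fun k => ?_
        rw [hr k]
        refine le_trans ?_ le_sup_right
        exact le_iSup_of_le (QuotientGroup.mk k)
          (le_iSup_of_le (Finset.mem_univ _) le_rfl)
      · refine sup_le hHM ?_
        refine iSup_le fun q => iSup_le fun _ => ?_
        exact hconj_le_M _ (hr_mem q)
    have hHM_ne : H.relIndex M ≠ 0 := by
      rw [hM_eq]
      exact (main Finset.univ).1
    -- M ⊔ K = H ⊔ K
    have hMK : M ⊔ K = H ⊔ K :=
      le_antisymm (sup_le hM_le_sup le_sup_right)
        (sup_le (le_trans hHM le_sup_left) le_sup_right)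
    -- |⟨M, K⟩ : M| is finite
    have hMrelK : M.relIndex K ≠ 0 := fun h0 =>
      hK (Subgroup.relIndex_eq_zero_of_le_left hHM h0)
    have hfinK : Finite (K ⧸ M.subgroupOf K) := by
      apply Nat.finite_of_card_ne_zero
      rw [← Subgroup.index_eq_card]
      exact hMrelK
    have hresp : ∀ a b : K, (QuotientGroup.leftRel (M.subgroupOf K)).r a b →
        (QuotientGroup.leftRel (M.subgroupOf (M ⊔ K))).r
          (Subgroup.inclusion (le_sup_right : K ≤ M ⊔ K) a)
          (Subgroup.inclusion (le_sup_right : K ≤ M ⊔ K) b) := by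
      intro a b hab
      rw [QuotientGroup.leftRel_apply] at hab ⊢
      rw [Subgroup.mem_subgroupOf] at hab ⊢
      simpa using hab
    have hsurj : Function.Surjective
        (@Quotient.map' _ _ (QuotientGroup.leftRel (M.subgroupOf K))
          (QuotientGroup.leftRel (M.subgroupOf (M ⊔ K)))
          (Subgroup.inclusion (le_sup_right : K ≤ M ⊔ K)) hresp :
          K ⧸ M.subgroupOf K → ↥(M ⊔ K) ⧸ M.subgroupOf (M ⊔ K)) := by
      intro x
      refine QuotientGroup.induction_on x ?_
      intro y
      obtain ⟨k, hk, m, hm, hy⟩ := exists_mul_of_mem_sup hMnorm (y : G) y.2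
      refine ⟨QuotientGroup.mk (⟨k, hk⟩ : K), ?_⟩
      show QuotientGroup.mk (Subgroup.inclusion _ (⟨k, hk⟩ : K)) = QuotientGroup.mk y
      rw [QuotientGroup.eq]
      rw [Subgroup.mem_subgroupOf]
      have : (((Subgroup.inclusion (le_sup_right : K ≤ M ⊔ K) (⟨k, hk⟩ : K))⁻¹ * y :
          ↥(M ⊔ K)) : G) = k⁻¹ * (y : G) := by
        simp [Subgroup.coe_inclusion]
      rw [this, hy]
      simpa [← mul_assoc] using hm
    have hfin2 : Finite (↥(M ⊔ K) ⧸ M.subgroupOf (M ⊔ K)) :=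
      Finite.of_surjective _ hsurj
    have hMrel : M.relIndex (M ⊔ K) ≠ 0 := by
      rw [Subgroup.relIndex]
      exact Subgroup.index_ne_zero_of_finite
    have hfinal := Subgroup.relIndex_ne_zero_trans hHM_ne hMrel
    rwa [hMK] at hfinal

end Aux

/-- If `H` is an inert subnormal subgroup of `G` and `K ≤ G` with `|K : H ∩ K|`
finite, then `|⟨H, K⟩ : H|` is finite. -/
theorem join_relindex_ne_zero_of_inert_subnormal (H K : Subgroup G)
    (hin : Inert H) (hsn : Subnormal H) (hK : H.relIndex K ≠ 0) :
    H.relIndex (H ⊔ K) ≠ 0 := by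
  obtain ⟨n, c, h0, htop, hchain⟩ := hsn
  exact key_inert_subnormal n c H K h0 hchain (htop ▸ le_top) hin hK
end

section
/- Every inert subnormal subgroup of a group is strongly inert. -/
variable {G : Type*} [Group G]

namespace Aux
open Pointwise

theorem mem_conjS {g x : G} {A : Subgroup G} : x ∈ conjS g A ↔ g⁻¹ * x * g ∈ A := by
  constructor
  · rintro ⟨a, ha, rfl⟩
    simpa [MulAut.conj_apply, mul_assoc] using ha
  · intro h
    exact ⟨g⁻¹ * x * g, h, by simp [MulAut.conj_apply, mul_assoc]⟩

theorem conjS_conjS (g h : G) (A : Subgroup G) : conjS g (conjS h A) = conjS (g * h) A := by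
  ext x
  simp [mem_conjS, mul_assoc]

theorem conjS_one (A : Subgroup G) : conjS (1 : G) A = A := by
  ext x; simp [mem_conjS]

theorem conjS_mono {A B : Subgroup G} (g : G) (h : A ≤ B) : conjS g A ≤ conjS g B :=
  Subgroup.map_mono h

theorem conjS_self_of_mem {a : G} {A : Subgroup G} (ha : a ∈ A) : conjS a A = A := by
  ext x
  rw [mem_conjS]
  constructor
  · intro h
    have := A.mul_mem (A.mul_mem ha h) (A.inv_mem ha)
    simpa [mul_assoc] using this
  · intro h
    exact A.mul_mem (A.mul_mem (A.inv_mem ha) h) ha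

theorem conjS_top (g : G) : conjS g (⊤ : Subgroup G) = ⊤ := by
  ext x; simp [mem_conjS]

theorem conjS_le_of_mem {g : G} {A J : Subgroup G} (hg : g ∈ J) (hA : A ≤ J) :
    conjS g A ≤ J := by
  intro x hx
  rw [mem_conjS] at hx
  have : g * (g⁻¹ * x * g) * g⁻¹ = x := by group
  rw [← this]
  exact J.mul_mem (J.mul_mem hg (hA hx)) (J.inv_mem hg)

theorem conjS_eq_smul (g : G) (A : Subgroup G) :
    conjS g A = (ConjAct.toConjAct g) • A := by
  ext x
  rw [mem_conjS, Subgroup.mem_pointwise_smul_iff_inv_smul_mem]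
  rw [ConjAct.smul_def]
  simp [mul_assoc]

theorem relIndex_conjS (g : G) (A B : Subgroup G) :
    (conjS g A).relIndex (conjS g B) = A.relIndex B := by
  rw [conjS_eq_smul, conjS_eq_smul]
  rw [Subgroup.relIndex, Subgroup.relIndex, Subgroup.index_eq_card, Subgroup.index_eq_card]
  exact (Nat.card_congr (Subgroup.quotConjEquiv A B (ConjAct.toConjAct g))).symm

theorem comm_conjS {A B : Subgroup G} (g : G) (h : Subgroup.Commensurable A B) :
    Subgroup.Commensurable (conjS g A) (conjS g B) := by
  rw [conjS_eq_smul, conjS_eq_smul]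
  exact (Subgroup.Commensurable.commensurable_conj _).mp h

theorem inert_comm {H : Subgroup G} (hin : Inert H) (g : G) :
    Subgroup.Commensurable (conjS g H) H := by
  refine ⟨hin g, ?_⟩
  have h1 : (conjS g⁻¹ H).relIndex H ≠ 0 := hin g⁻¹
  have := relIndex_conjS g (conjS g⁻¹ H) H
  rw [conjS_conjS, mul_inv_cancel, conjS_one] at this
  rw [← this] at h1
  exact h1

end Aux

namespace Aux

/-- `X` is subnormal in `J` via a chain of length exactly `d`. -/
def SubnInLen (X J : Subgroup G) (d : ℕ) : Prop :=
  ∃ c : ℕ → Subgroup G, c 0 = X ∧ c d = J ∧ SubnormalChain c d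

theorem chain_mono {c : ℕ → Subgroup G} {n : ℕ} (hc : SubnormalChain c n) :
    ∀ j ≤ n, c 0 ≤ c j := by
  intro j
  induction j with
  | zero => intro _; exact le_rfl
  | succ j ih =>
      intro hj
      exact le_trans (ih (Nat.le_of_succ_le hj)) (hc j (Nat.lt_of_succ_le hj)).1

theorem subnInLen_le {X J : Subgroup G} {d : ℕ} (h : SubnInLen X J d) : X ≤ J := by
  obtain ⟨c, h0, hd, hc⟩ := h
  have := chain_mono hc d le_rfl
  rwa [h0, hd] at this

theorem subnInLen_restrict {X K J : Subgroup G} {d : ℕ} (h : SubnInLen X J d)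
    (hXK : X ≤ K) (hKJ : K ≤ J) : SubnInLen X K d := by
  obtain ⟨c, h0, hd, hc⟩ := h
  refine ⟨fun i => c i ⊓ K, ?_, ?_, ?_⟩
  · show c 0 ⊓ K = X
    rw [h0]; exact inf_eq_left.mpr hXK
  · show c d ⊓ K = K
    rw [hd]; exact inf_eq_right.mpr hKJ
  · intro i hi
    refine ⟨inf_le_inf_right K (hc i hi).1, ?_⟩
    rintro x ⟨hx1, hx2⟩ h ⟨hh1, hh2⟩
    exact ⟨(hc i hi).2 x hx1 h hh1, K.mul_mem (K.mul_mem hx2 hh2) (K.inv_mem hx2)⟩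

theorem subnInLen_conj {X J : Subgroup G} {d : ℕ} (h : SubnInLen X J d) (g : G) :
    SubnInLen (conjS g X) (conjS g J) d := by
  obtain ⟨c, h0, hd, hc⟩ := h
  refine ⟨fun i => conjS g (c i), by show conjS g (c 0) = _; rw [h0], by show conjS g (c d) = _; rw [hd], ?_⟩
  intro i hi
  refine ⟨conjS_mono g (hc i hi).1, ?_⟩
  intro x hx h hh
  rw [mem_conjS] at hx hh ⊢
  have heq : g⁻¹ * (x * h * x⁻¹) * g
      = (g⁻¹ * x * g) * (g⁻¹ * h * g) * (g⁻¹ * x * g)⁻¹ := by group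
  rw [heq]
  exact (hc i hi).2 _ hx _ hh

end Aux

namespace Aux

open Pointwise in
theorem relIndex_sup_ne_zero {N Y J : Subgroup G} (hNJ : N ≤ J) (hYJ : Y ≤ J)
    (hconj : ∀ z ∈ Y, ∀ n ∈ N, z * n * z⁻¹ ∈ N)
    (hsup : J ≤ Y ⊔ N)
    (hrel : (N ⊓ Y).relIndex Y ≠ 0) : N.relIndex J ≠ 0 := by
  -- the set Y * N is a subgroup
  have hprod : ∀ j ∈ J, ∃ y ∈ Y, ∃ n ∈ N, y * n = j := by
    let P : Subgroup G :=
      { carrier := (Y : Set G) * (N : Set G)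
        one_mem' := ⟨1, Y.one_mem, 1, N.one_mem, by simp⟩
        mul_mem' := by
          rintro a b ⟨y₁, hy₁, n₁, hn₁, rfl⟩ ⟨y₂, hy₂, n₂, hn₂, rfl⟩
          refine ⟨y₁ * y₂, Y.mul_mem hy₁ hy₂, (y₂⁻¹ * n₁ * y₂) * n₂, ?_, by group⟩
          have := hconj y₂⁻¹ (Y.inv_mem hy₂) n₁ hn₁
          rw [inv_inv] at this
          exact N.mul_mem this hn₂
        inv_mem' := by
          rintro a ⟨y, hy, n, hn, rfl⟩
          exact ⟨y⁻¹, Y.inv_mem hy, y * n⁻¹ * y⁻¹, hconj y hy n⁻¹ (N.inv_mem hn), by group⟩ }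
    have hJP : J ≤ P := by
      refine hsup.trans (sup_le ?_ ?_)
      · intro y hy; exact ⟨y, hy, 1, N.one_mem, mul_one y⟩
      · intro n hn; exact ⟨1, Y.one_mem, n, hn, one_mul n⟩
    intro j hj
    have hjP : j ∈ (Y : Set G) * (N : Set G) := hJP hj
    exact Set.mem_mul.mp hjP
  -- quotient surjection
  have hfin : Finite (Y ⧸ (N ⊓ Y).subgroupOf Y) := by
    rw [Subgroup.relIndex, Subgroup.index_eq_card] at hrel
    exact (Nat.card_ne_zero.mp hrel).2
  set φ : Y ⧸ (N ⊓ Y).subgroupOf Y → J ⧸ N.subgroupOf J :=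
    Quotient.map' (fun y => (⟨(y : G), hYJ y.2⟩ : J)) (by
      intro a b hab
      rw [QuotientGroup.leftRel_apply] at hab ⊢
      rw [Subgroup.mem_subgroupOf] at hab ⊢
      exact hab.1) with hφ
  have hsurj : Function.Surjective φ := by
    intro q
    refine QuotientGroup.induction_on q ?_
    intro j
    obtain ⟨y, hy, n, hn, hyn⟩ := hprod (j : G) j.2
    refine ⟨QuotientGroup.mk (⟨y, hy⟩ : Y), ?_⟩
    show Quotient.map' _ _ (QuotientGroup.mk (⟨y, hy⟩ : Y)) = QuotientGroup.mk j
    rw [QuotientGroup.mk, Quotient.map'_mk'']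
    rw [QuotientGroup.eq]
    rw [Subgroup.mem_subgroupOf]
    show (y : G)⁻¹ * (j : G) ∈ N
    rw [← hyn]
    simpa using hn
  rw [Subgroup.relIndex, Subgroup.index_eq_card]
  rw [Nat.card_ne_zero]
  exact ⟨⟨QuotientGroup.mk 1⟩, Finite.of_surjective φ hsurj⟩

end Aux

namespace Aux

theorem conj_mem_conjS {z h : G} {N : Subgroup G} (hh : h ∈ N) : z * h * z⁻¹ ∈ conjS z N := by
  rw [mem_conjS]
  have heq : z⁻¹ * (z * h * z⁻¹) * z = h := by group
  rwa [heq]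

theorem exists_reps (X0 Y : Subgroup G) (h : (X0 ⊓ Y).relIndex Y ≠ 0) :
    ∃ (s : ℕ) (u : ℕ → G), (∀ i, u i ∈ Y) ∧ conjS (u 0) X0 = X0 ∧
      ∀ z ∈ Y, ∃ i, i < s + 1 ∧ conjS z X0 = conjS (u i) X0 := by
  haveI hfinQ : Finite (Y ⧸ (X0 ⊓ Y).subgroupOf Y) := by
    rw [Subgroup.relIndex, Subgroup.index_eq_card] at h
    exact (Nat.card_ne_zero.mp h).2
  haveI : Nonempty (Y ⧸ (X0 ⊓ Y).subgroupOf Y) := ⟨QuotientGroup.mk 1⟩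
  obtain ⟨s, ⟨e⟩⟩ : ∃ s : ℕ, Nonempty ((Y ⧸ (X0 ⊓ Y).subgroupOf Y) ≃ Fin s) :=
    ⟨_, ⟨Finite.equivFin _⟩⟩
  have hspos : 0 < s := by
    rcases Nat.eq_zero_or_pos s with h0 | hp
    · subst h0
      exact (e (QuotientGroup.mk 1)).elim0
    · exact hp
  have hout : ∀ z : Y,
      conjS (((QuotientGroup.mk z : Y ⧸ (X0 ⊓ Y).subgroupOf Y).out : Y) : G) X0
        = conjS (z : G) X0 := by
    intro z
    obtain ⟨hh, hheq⟩ := QuotientGroup.mk_out_eq_mul ((X0 ⊓ Y).subgroupOf Y) z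
    rw [hheq]
    have hhX : ((hh : Y) : G) ∈ X0 := (Subgroup.mem_subgroupOf.mp hh.2).1
    rw [Subgroup.coe_mul, ← conjS_conjS, conjS_self_of_mem hhX]
  refine ⟨s, fun i => if i = 0 then
      (((QuotientGroup.mk (1 : Y) : Y ⧸ (X0 ⊓ Y).subgroupOf Y).out : Y) : G)
    else (((e.symm ⟨(i - 1) % s, Nat.mod_lt _ hspos⟩).out : Y) : G), ?_, ?_, ?_⟩
  · intro i
    by_cases hi : i = 0 <;> simp only [hi, if_pos, if_neg, if_true, if_false] <;>
      exact Subtype.coe_prop _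
  · show conjS (if 0 = 0 then _ else _) X0 = X0
    rw [if_pos rfl, hout (1 : Y)]
    simpa using conjS_one X0
  · intro z hz
    refine ⟨(e (QuotientGroup.mk (⟨z, hz⟩ : Y))).1 + 1, by
      have := (e (QuotientGroup.mk (⟨z, hz⟩ : Y))).2; omega, ?_⟩
    show conjS z X0 = conjS (if (e (QuotientGroup.mk (⟨z, hz⟩ : Y))).1 + 1 = 0 then _ else _) X0
    rw [if_neg (Nat.succ_ne_zero _)]
    have hmod : ((e (QuotientGroup.mk (⟨z, hz⟩ : Y))).1 + 1 - 1) % s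
        = (e (QuotientGroup.mk (⟨z, hz⟩ : Y))).1 := by
      simp [Nat.mod_eq_of_lt (e (QuotientGroup.mk (⟨z, hz⟩ : Y))).2]
    have : (⟨((e (QuotientGroup.mk (⟨z, hz⟩ : Y))).1 + 1 - 1) % s, Nat.mod_lt _ hspos⟩
        : Fin s) = e (QuotientGroup.mk (⟨z, hz⟩ : Y)) := by
      ext
      simp only [hmod]
    rw [this, Equiv.symm_apply_apply, hout]

end Aux

namespace Aux

theorem main {H : Subgroup G} (hin : Inert H) :
    ∀ d r : ℕ, ∀ X : ℕ → Subgroup G, ∀ J : Subgroup G,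
      J = ⨆ i ∈ Finset.range (r + 1), X i →
      (∀ i, i ≤ r → Subgroup.Commensurable (X i) H) →
      (∀ i, i ≤ r → SubnInLen (X i) J d) →
      (X 0).relIndex J ≠ 0 := by
  intro d
  induction d with
  | zero =>
      intro r X J hJ hcomm hch
      obtain ⟨c, hc0, hcd, -⟩ := hch 0 (Nat.zero_le r)
      have hXJ : X 0 = J := by rw [← hc0, hcd]
      rw [hXJ, Subgroup.relIndex_self]
      exact one_ne_zero
  | succ d ihd =>
      intro r
      induction r with
      | zero =>
          intro X J hJ hcomm hch
          have hJX : J = X 0 := by rw [hJ]; simp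
          rw [hJX, Subgroup.relIndex_self]
          exact one_ne_zero
      | succ r ihr =>
          intro X J hJ hcomm hch
          obtain ⟨Y, hY⟩ : ∃ Y' : Subgroup G, Y' = ⨆ i ∈ Finset.range (r + 1), X (i + 1) :=
            ⟨_, rfl⟩
          have hXY : ∀ i ≤ r, X (i + 1) ≤ Y := fun i hi => by
            rw [hY]
            exact le_biSup (fun j => X (j + 1)) (Finset.mem_range.mpr (Nat.lt_succ_of_le hi))
          have hX0J : X 0 ≤ J := by
            rw [hJ]; exact le_biSup X (Finset.mem_range.mpr (Nat.succ_pos _))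
          have hYJ : Y ≤ J := by
            rw [hJ, hY]
            refine iSup₂_le fun i hi => ?_
            exact le_biSup X (Finset.mem_range.mpr (by have := Finset.mem_range.mp hi; omega))
          have hJ' : J = X 0 ⊔ Y := by
            apply le_antisymm
            · rw [hJ]
              refine iSup₂_le fun i hi => ?_
              rcases i with _ | k
              · exact le_sup_left
              · have hk : k ≤ r := by have := Finset.mem_range.mp hi; omega
                exact le_trans (hXY k hk) le_sup_right
            · exact sup_le hX0J hYJ
          have hY1 : (X 1).relIndex Y ≠ 0 := by
            refine ihr (fun i => X (i + 1)) Y hY (fun i hi => hcomm (i + 1) (by omega)) ?_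
            intro i hi
            exact subnInLen_restrict (hch (i + 1) (by omega)) (hXY i hi) hYJ
          have hX1Y : X 1 ≤ Y := hXY 0 (Nat.zero_le r)
          have hYX1 : Subgroup.Commensurable Y (X 1) := by
            constructor
            · rw [← Subgroup.inf_relIndex_right, inf_eq_right.mpr hX1Y, Subgroup.relIndex_self]
              exact one_ne_zero
            · exact hY1
          have hYH : Subgroup.Commensurable Y H := hYX1.trans (hcomm 1 (by omega))
          have hX0Y : Subgroup.Commensurable (X 0) Y := (hcomm 0 (by omega)).trans hYH.symm
          have hDY : ((X 0) ⊓ Y).relIndex Y ≠ 0 := by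
            rw [Subgroup.inf_relIndex_right]; exact hX0Y.1
          obtain ⟨s, u, hu, hu0, hcover⟩ := exists_reps (X 0) Y hDY
          obtain ⟨N, hN⟩ : ∃ N' : Subgroup G,
              N' = ⨆ i ∈ Finset.range (s + 1), conjS (u i) (X 0) := ⟨_, rfl⟩
          have ha : ∀ z, z ∈ Y → conjS z (X 0) ≤ N := by
            intro z hz
            obtain ⟨i, hi, hiz⟩ := hcover z hz
            rw [hiz, hN]
            exact le_biSup (fun i => conjS (u i) (X 0)) (Finset.mem_range.mpr hi)
          have hX0N : X 0 ≤ N := by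
            have h1 := ha 1 Y.one_mem
            rwa [conjS_one] at h1
          have hNJ : N ≤ J := by
            rw [hN]
            exact iSup₂_le fun i _ => conjS_le_of_mem (hYJ (hu i)) hX0J
          have hbY : ∀ z, z ∈ Y → conjS z N ≤ N := by
            intro z hz
            have h4 : (⨆ i ∈ Finset.range (s + 1), conjS (u i) (X 0)) ≤
                Subgroup.comap (MulAut.conj z).toMonoidHom N := by
              refine iSup₂_le fun i _ => ?_
              rw [← Subgroup.map_le_iff_le_comap]
              show conjS z (conjS (u i) (X 0)) ≤ N
              rw [conjS_conjS]
              exact ha _ (Y.mul_mem hz (hu i))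
            rw [← hN] at h4
            exact Subgroup.map_le_iff_le_comap.mpr h4
          have hbY' : ∀ z, z ∈ Y → conjS z N = N := by
            intro z hz
            refine le_antisymm (hbY z hz) ?_
            have h2 := conjS_mono z (hbY z⁻¹ (Y.inv_mem hz))
            rwa [conjS_conjS, mul_inv_cancel, conjS_one] at h2
          have hnormal : ∀ j ∈ J, ∀ n ∈ N, j * n * j⁻¹ ∈ N := by
            have hJnorm : J ≤ Subgroup.normalizer (N : Set G) := by
              rw [hJ']
              refine sup_le (le_trans hX0N Subgroup.le_normalizer) ?_
              intro z hz
              rw [Subgroup.mem_normalizer_iff]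
              intro h
              constructor
              · intro hhN
                have h3 := conj_mem_conjS (z := z) hhN
                rwa [hbY' z hz] at h3
              · intro hzN
                rw [← hbY' z hz] at hzN
                have h3 := mem_conjS.mp hzN
                have heq : z⁻¹ * (z * h * z⁻¹) * z = h := by group
                rwa [heq] at h3
            intro j hj n hn
            exact (Subgroup.mem_normalizer_iff.mp (hJnorm hj) n).mp hn
          have hrelNJ : N.relIndex J ≠ 0 := by
            refine relIndex_sup_ne_zero hNJ hYJ
              (fun z hz n hn => hnormal z (hYJ hz) n hn) ?_ ?_
            · rw [hJ']
              exact sup_le (hX0N.trans le_sup_right) le_sup_left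
            · have hdvd := Subgroup.relIndex_dvd_of_le_left Y
                (inf_le_inf_right Y hX0N)
              intro h0
              exact hDY (Nat.eq_zero_of_zero_dvd (h0 ▸ hdvd))
          obtain ⟨c, hc0, hcd, hcc⟩ := hch 0 (Nat.zero_le _)
          have hKinv : ∀ x ∈ J, ∀ h ∈ c d, x * h * x⁻¹ ∈ c d := by
            intro x hx h hh
            exact (hcc d (Nat.lt_succ_self d)).2 x (hcd ▸ hx) h hh
          have hX0K : X 0 ≤ c d := by rw [← hc0]; exact chain_mono hcc d (Nat.le_succ d)
          have hchainK : SubnInLen (X 0) (c d) d :=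
            ⟨c, hc0, rfl, fun i hi => hcc i (Nat.lt_succ_of_lt hi)⟩
          have hconjK : ∀ z ∈ J, conjS z (c d) = c d := by
            intro z hz
            apply le_antisymm
            · intro x hx
              rw [mem_conjS] at hx
              have h3 := hKinv z hz _ hx
              have heq : z * (z⁻¹ * x * z) * z⁻¹ = x := by group
              rwa [heq] at h3
            · intro x hx
              rw [mem_conjS]
              have h3 := hKinv z⁻¹ (J.inv_mem hz) x hx
              rwa [inv_inv] at h3
          have hNK : N ≤ c d := by
            rw [hN]
            refine iSup₂_le fun i _ => ?_
            rw [← hconjK (u i) (hYJ (hu i))]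
            exact conjS_mono _ hX0K
          have hchainN : ∀ i, SubnInLen (conjS (u i) (X 0)) N d := by
            intro i
            have h1 := subnInLen_conj hchainK (u i)
            rw [hconjK (u i) (hYJ (hu i))] at h1
            exact subnInLen_restrict h1 (ha (u i) (hu i)) hNK
          have hmain := ihd s (fun i => conjS (u i) (X 0)) N hN
            (fun i _ => (comm_conjS (u i) (hcomm 0 (Nat.zero_le _))).trans
              (inert_comm hin (u i)))
            (fun i _ => hchainN i)
          have hmain' : (conjS (u 0) (X 0)).relIndex N ≠ 0 := hmain
          rw [hu0] at hmain'
          rw [← Subgroup.relIndex_mul_relIndex (X 0) N J hX0N hNJ]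
          exact mul_ne_zero hmain' hrelNJ

end Aux

/-- Every inert subnormal subgroup is strongly inert. -/
theorem stronglyInert_of_inert_subnormal (H : Subgroup G)
    (hin : Inert H) (hsn : Subnormal H) : StronglyInert H := by
  intro g
  obtain ⟨n, c, h0, htop, hcc⟩ := hsn
  have hHtop : Aux.SubnInLen H ⊤ n := ⟨c, h0, htop, hcc⟩
  have hX0 : (fun i => if i = 0 then H else conjS g H) 0 = H := by simp
  have hJ : H ⊔ conjS g H
      = ⨆ i ∈ Finset.range 2, (fun i => if i = 0 then H else conjS g H) i := by
    apply le_antisymm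
    · refine sup_le ?_ ?_
      · have := le_biSup (fun i => if i = 0 then H else conjS g H)
          (Finset.mem_range.mpr (show (0:ℕ) < 2 by omega))
        rw [if_pos rfl] at this; exact this
      · have := le_biSup (fun i => if i = 0 then H else conjS g H)
          (Finset.mem_range.mpr (show (1:ℕ) < 2 by omega))
        have h1 : (fun i => if i = 0 then H else conjS g H) 1 = conjS g H := by simp
        rw [if_neg one_ne_zero] at this; exact this
    · refine iSup₂_le fun i _ => ?_
      by_cases hi : i = 0
      · simp [hi]
      · simp [hi]
  have hres := Aux.main hin n 1 (fun i => if i = 0 then H else conjS g H)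
    (H ⊔ conjS g H) hJ ?_ ?_
  · rwa [if_pos rfl] at hres
  · intro i hi
    by_cases h : i = 0
    · simpa [h] using Subgroup.Commensurable.refl H
    · simpa [h] using Aux.inert_comm hin g
  · intro i hi
    by_cases h : i = 0
    · simp only [h, if_pos rfl]
      exact Aux.subnInLen_restrict hHtop le_sup_left le_top
    · simp only [h, if_neg h]
      have h1 := Aux.subnInLen_conj hHtop g
      rw [Aux.conjS_top] at h1
      exact Aux.subnInLen_restrict h1 le_sup_right le_top
end

section
/- In a generalized dihedral group G = ⟨x⟩ ⋉ A, where A is abelian and x acts on A as the inversion map, every subgroup H satisfies |H : H_G| ≤ 2, where H_G is the normal core of H in G. In particular every subgroup of G is inert. -/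
variable {G : Type*} [Group G]

/-- In a generalized dihedral group `G = ⟨x⟩ ⋉ A`, every subgroup `H` satisfies
`|H : H_G| ≤ 2`; in particular every subgroup is inert. -/
theorem dihedral_subgroup_core_index_le_two
    (A : Subgroup G) (hA : A.Normal) (hcomm : ∀ a ∈ A, ∀ b ∈ A, a * b = b * a)
    (x : G) (hx1 : x ≠ 1) (hx2 : x ^ 2 = 1) (hxA : x ∉ A)
    (hinv : ∀ a ∈ A, x * a * x⁻¹ = a⁻¹)
    (hgen : Subgroup.closure {x} ⊔ A = ⊤) :
    ∀ H : Subgroup G,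
      (H.normalCore.relIndex H ≤ 2 ∧ H.normalCore.relIndex H ≠ 0) ∧ Inert H := by
  have hxx : x * x = 1 := by rw [← sq]; exact hx2
  have hxinv : x⁻¹ = x := by
    rw [eq_comm, eq_inv_iff_mul_eq_one]; exact hxx
  -- every element of the closure of {x} is 1 or x
  have hclos : ∀ y ∈ Subgroup.closure {x}, y = 1 ∨ y = x := by
    intro y hy
    refine Subgroup.closure_induction (fun z hz => ?_) ?_
      (fun z w _ _ ihz ihw => ?_) (fun z _ ihz => ?_) hy
    · exact Or.inr hz
    · exact Or.inl rfl
    · rcases ihz with rfl | rfl <;> rcases ihw with rfl | rfl <;> simp [hxx]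
    · rcases ihz with rfl | rfl <;> simp [hxinv]
  -- every element of G is in A or x * g ∈ A
  have hcases : ∀ g : G, g ∈ A ∨ x * g ∈ A := by
    intro g
    have hg : g ∈ (↑(Subgroup.closure {x} ⊔ A) : Set G) := by
      rw [hgen]; trivial
    rw [Subgroup.mul_normal] at hg
    rcases hg with ⟨y, hy, a, ha, rfl⟩
    rcases hclos y hy with rfl | rfl
    · exact Or.inl (by simpa using ha)
    · refine Or.inr ?_
      rwa [← mul_assoc, hxx, one_mul]
  -- A has index 2
  have hAidx : A.index = 2 := by
    rw [Subgroup.index_eq_two_iff]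
    refine ⟨x, fun b => ?_⟩
    by_cases hb : b ∈ A
    · refine Or.inr ⟨hb, fun hbx => hxA ?_⟩
      have := A.mul_mem (A.inv_mem hb) hbx
      rwa [inv_mul_cancel_left] at this
    · refine Or.inl ⟨?_, hb⟩
      rcases hcases b with h | h
      · exact absurd h hb
      · have := hA.conj_mem _ h x⁻¹
        rwa [hxinv, mul_assoc, mul_assoc, ← mul_assoc x b, hxinv, ← mul_assoc,
          ← mul_assoc, hxx, one_mul] at this
  intro H
  -- B = H ⊓ A is normal in G
  have hBnormal : (H ⊓ A).Normal := by
    constructor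
    intro b hb g
    obtain ⟨hbH, hbA⟩ := hb
    rcases hcases g with hg | hg
    · have : g * b = b * g := hcomm g hg b hbA
      rw [this, mul_assoc, mul_inv_cancel, mul_one]
      exact ⟨hbH, hbA⟩
    · -- g = x⁻¹ * (x * g) = x * a with a = x*g ∈ A
      set a := x * g with ha_def
      have hg_eq : g = x * a := by rw [ha_def, ← mul_assoc, hxx, one_mul]
      have hab : a * b * a⁻¹ = b := by
        rw [hcomm a hg b hbA, mul_inv_cancel_right]
      have hconj : g * b * g⁻¹ = b⁻¹ := by
        rw [hg_eq, mul_inv_rev,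
          show x * a * b * (a⁻¹ * x⁻¹) = x * (a * b * a⁻¹) * x⁻¹ from by group, hab]
        exact hinv b hbA
      rw [hconj]
      exact ⟨H.inv_mem hbH, A.inv_mem hbA⟩
  have hBle : H ⊓ A ≤ H.normalCore := by
    have := hBnormal
    exact Subgroup.normal_le_normalCore.mpr inf_le_left
  have hdvd2 : H.normalCore.relIndex H ∣ 2 := by
    have h1 : H.normalCore.relIndex H ∣ (H ⊓ A).relIndex H :=
      Subgroup.relIndex_dvd_of_le_left H hBle
    rw [Subgroup.inf_relIndex_left] at h1
    exact h1.trans (hAidx ▸ Subgroup.relIndex_dvd_index_of_normal A H)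
  have hne : H.normalCore.relIndex H ≠ 0 := fun h => by
    rw [h] at hdvd2; exact two_ne_zero (Nat.eq_zero_of_zero_dvd hdvd2)
  refine ⟨⟨Nat.le_of_dvd two_pos hdvd2, hne⟩, fun g => ?_⟩
  have hle : H.normalCore ≤ conjS g H := by
    intro h hh
    refine ⟨g⁻¹ * h * g, ?_, by simp [conjS]; group⟩
    have := (Subgroup.normalCore_normal H).conj_mem h hh g⁻¹
    simpa using H.normalCore_le this
  intro h0
  exact hne (Nat.eq_zero_of_zero_dvd (h0 ▸ Subgroup.relIndex_dvd_of_le_left H hle))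
end

section
/- The set of inertial automorphisms of an abelian group A forms a subgroup of Aut(A). -/
lemma inertial_one {A : Type*} [CommGroup A] (X : Subgroup A) :
    Subgroup.Commensurable X (X.map (1 : MulAut A).toMonoidHom) := by
  have : X.map (1 : MulAut A).toMonoidHom = X := by ext x; simp
  rw [this]

lemma inertial_mul {A : Type*} [CommGroup A] {γ δ : MulAut A}
    (hγ : ∀ X : Subgroup A, Subgroup.Commensurable X (X.map γ.toMonoidHom))
    (hδ : ∀ X : Subgroup A, Subgroup.Commensurable X (X.map δ.toMonoidHom))
    (X : Subgroup A) : Subgroup.Commensurable X (X.map (γ * δ).toMonoidHom) := by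
  have h1 : X.map (γ * δ).toMonoidHom = (X.map δ.toMonoidHom).map γ.toMonoidHom := by
    rw [Subgroup.map_map]; rfl
  rw [h1]
  exact (hδ X).trans (hγ (X.map δ.toMonoidHom))

lemma inertial_inv {A : Type*} [CommGroup A] {γ : MulAut A}
    (hγ : ∀ X : Subgroup A, Subgroup.Commensurable X (X.map γ.toMonoidHom))
    (X : Subgroup A) : Subgroup.Commensurable X (X.map γ⁻¹.toMonoidHom) := by
  have h1 : (X.map γ⁻¹.toMonoidHom).map γ.toMonoidHom = X := by
    rw [Subgroup.map_map]
    ext x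
    simp [MonoidHom.comp_apply]
  have := hγ (X.map γ⁻¹.toMonoidHom)
  rw [h1] at this
  exact this.symm

/-- The inertial automorphisms of an abelian group `A` form a subgroup of
`Aut(A)`. -/
theorem inertial_automorphisms_form_subgroup {A : Type*} [CommGroup A] :
    ∃ S : Subgroup (MulAut A),
      ∀ γ : MulAut A,
        γ ∈ S ↔ ∀ X : Subgroup A, Subgroup.Commensurable X (X.map γ.toMonoidHom) := by
  exact ⟨{ carrier := {γ | ∀ X : Subgroup A, Subgroup.Commensurable X (X.map γ.toMonoidHom)}
           one_mem' := inertial_one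
           mul_mem' := fun hγ hδ => inertial_mul hγ hδ
           inv_mem' := fun hγ => inertial_inv hγ }, fun γ => Iff.rfl⟩
end

section
/- Let G₁ ≤ G₀ be normal subgroups of a group G with G₁ and G/G₀ finite. If every subgroup H with G₁ ≤ H ≤ G₀ and H/G₁ subnormal in G₀/G₁ is inert in G, then every subnormal subgroup of G is inert; that is, G is a T̃-group. -/
variable {G : Type*} [Group G]

open Pointwise

lemma conjS_eq (g : G) (H : Subgroup G) : conjS g H = ConjAct.toConjAct g • H := by
  ext x
  rw [Subgroup.mem_pointwise_smul_iff_inv_smul_mem]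
  simp only [conjS, Subgroup.mem_map, MulEquiv.coe_toMonoidHom, MulAut.conj_apply,
    ConjAct.smul_def, map_inv, ConjAct.ofConjAct_toConjAct, inv_inv]
  constructor
  · rintro ⟨h, hh, rfl⟩
    simpa [mul_assoc] using hh
  · intro hx
    exact ⟨g⁻¹ * x * g, hx, by group⟩

lemma relIndex_smul (g : ConjAct G) (H K : Subgroup G) :
    (g • H).relIndex (g • K) = H.relIndex K :=
  (Nat.card_congr (Subgroup.quotConjEquiv H K g)).symm

lemma inert_conj_commensurable {K : Subgroup G} (hK : Inert K) (g : G) :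
    Subgroup.Commensurable (conjS g K) K := by
  refine ⟨hK g, ?_⟩
  have h := relIndex_smul (ConjAct.toConjAct g) (conjS g⁻¹ K) K
  have h2 : ConjAct.toConjAct g • conjS g⁻¹ K = K := by
    rw [conjS_eq, map_inv, smul_inv_smul]
  rw [h2] at h
  rw [conjS_eq, h]
  exact hK g⁻¹

lemma inert_of_commensurable {H K : Subgroup G} (hc : Subgroup.Commensurable H K) (hK : Inert K) :
    Inert H := by
  intro g
  have h1 : Subgroup.Commensurable (conjS g H) (conjS g K) := by
    rw [conjS_eq, conjS_eq]
    exact (Subgroup.Commensurable.commensurable_conj _).mp hc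
  have h2 : Subgroup.Commensurable (conjS g K) K := inert_conj_commensurable hK g
  exact ((h1.trans h2).trans hc.symm).1

lemma commensurable_sup_finite (H N : Subgroup G) [hN : N.Normal] (hf : Finite N) :
    Subgroup.Commensurable H (H ⊔ N) := by
  constructor
  · -- `H` has finite index in `H ⊔ N` since `N` is finite
    have hsurj : Function.Surjective
        (fun n : N => (QuotientGroup.mk ⟨(n : G), Subgroup.mem_sup_right n.2⟩ :
          ↥(H ⊔ N) ⧸ H.subgroupOf (H ⊔ N))) := by
      intro q
      refine QuotientGroup.induction_on q ?_
      intro x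
      have hx : (x : G) ∈ (N : Set G) * H := by
        rw [← Subgroup.normal_mul]
        exact sup_comm H N ▸ x.2
      obtain ⟨m, hm, a, ha, hx⟩ := hx
      refine ⟨⟨m, hm⟩, ?_⟩
      rw [QuotientGroup.eq]
      simp only [Subgroup.mem_subgroupOf]
      show (⟨m, _⟩ : ↥(H ⊔ N))⁻¹.1 * x.1 ∈ H
      simp only [← hx]
      simpa [mul_assoc] using ha
    have : Finite (↥(H ⊔ N) ⧸ H.subgroupOf (H ⊔ N)) := Finite.of_surjective _ hsurj
    exact Subgroup.index_ne_zero_of_finite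
  · have : (H ⊔ N).relIndex H = 1 := Subgroup.relIndex_eq_one.mpr le_sup_left
    simp [this]

lemma commensurable_inf_of_index {A G₀ : Subgroup G} [G₀.Normal] (h : G₀.index ≠ 0) :
    Subgroup.Commensurable A (A ⊓ G₀) := by
  constructor
  · have : A.relIndex (A ⊓ G₀) = 1 := Subgroup.relIndex_eq_one.mpr inf_le_left
    simp [this]
  · rw [inf_comm, Subgroup.inf_relIndex_right]
    intro h0
    exact h (Nat.eq_zero_of_zero_dvd (h0 ▸ Subgroup.relIndex_dvd_index_of_normal G₀ A))

lemma conj_mem_sup_of_chain {A B N : Subgroup G} [hN : N.Normal]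
    (hconj : ∀ x ∈ B, ∀ a ∈ A, x * a * x⁻¹ ∈ A) :
    ∀ x ∈ B ⊔ N, ∀ y ∈ A ⊔ N, x * y * x⁻¹ ∈ A ⊔ N := by
  have step1 : ∀ g ∈ N, ∀ y ∈ A ⊔ N, g * y * g⁻¹ ∈ A ⊔ N := by
    intro g hg y hy
    have h1 : g * (y * g⁻¹ * y⁻¹) ∈ N := mul_mem hg (hN.conj_mem _ (inv_mem hg) y)
    have heq : g * y * g⁻¹ = (g * (y * g⁻¹ * y⁻¹)) * y := by group
    rw [heq]
    exact mul_mem (Subgroup.mem_sup_right h1) hy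
  have step2 : ∀ b ∈ B, ∀ y ∈ A ⊔ N, b * y * b⁻¹ ∈ A ⊔ N := by
    intro b hb y hy
    have hy' : y ∈ (A : Set G) * N := by
      rw [← Subgroup.mul_normal]; exact hy
    obtain ⟨a, ha, m, hm, rfl⟩ := hy'
    have heq : b * (a * m) * b⁻¹ = (b * a * b⁻¹) * (b * m * b⁻¹) := by group
    rw [heq]
    exact mul_mem (Subgroup.mem_sup_left (hconj b hb a ha)) (Subgroup.mem_sup_right (hN.conj_mem _ hm b))
  intro x hx y hy
  have hx' : x ∈ (B : Set G) * N := by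
    rw [← Subgroup.mul_normal]; exact hx
  obtain ⟨b, hb, m, hm, rfl⟩ := hx'
  have heq : (b * m) * y * (b * m)⁻¹ = b * (m * y * m⁻¹) * b⁻¹ := by group
  rw [heq]
  exact step2 b hb _ (step1 m hm y hy)

/-- Let `G₁ ≤ G₀` be normal subgroups of `G` with `G₁` finite and `G/G₀`
finite. If every subgroup `H` with `G₁ ≤ H ≤ G₀` whose image `H/G₁` is
subnormal in `G₀/G₁` is inert in `G`, then every subnormal subgroup of `G`
is inert. -/
theorem ttilde_of_finite_sandwich
    (G₀ G₁ : Subgroup G) (h01 : G₁ ≤ G₀)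
    [hn1 : G₁.Normal] [hn0 : G₀.Normal]
    (hfin1 : Finite G₁) (hfin0 : G₀.index ≠ 0)
    (hhyp : ∀ H : Subgroup G, G₁ ≤ H → H ≤ G₀ →
      Subnormal ((H.subgroupOf G₀).map (QuotientGroup.mk' (G₁.subgroupOf G₀))) →
      Inert H) :
    ∀ H : Subgroup G, Subnormal H → Inert H := by
  intro H hsub
  obtain ⟨n, c, hc0, hcn, hchain⟩ := hsub
  subst hc0
  set K : Subgroup G := (c 0 ⊔ G₁) ⊓ G₀ with hK
  -- the chain of intersections
  set d : ℕ → Subgroup G := fun i => (c i ⊔ G₁) ⊓ G₀ with hd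
  have hdchain : SubnormalChain d n := by
    intro i hi
    obtain ⟨hle, hconj⟩ := hchain i hi
    refine ⟨inf_le_inf_right _ (sup_le_sup_right hle _), ?_⟩
    intro x hx h hh
    obtain ⟨hx1, hx0⟩ := Subgroup.mem_inf.mp hx
    obtain ⟨hh1, hh0⟩ := Subgroup.mem_inf.mp hh
    exact Subgroup.mem_inf.mpr
      ⟨conj_mem_sup_of_chain hconj x hx1 h hh1, hn0.conj_mem _ hh0 x⟩
  -- the image chain in the quotient
  have hsubq : Subnormal ((K.subgroupOf G₀).map (QuotientGroup.mk' (G₁.subgroupOf G₀))) := by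
    refine ⟨n, fun i => ((d i).subgroupOf G₀).map (QuotientGroup.mk' (G₁.subgroupOf G₀)),
      rfl, ?_, ?_⟩
    · have hdn : d n = G₀ := by
        simp only [hd, hcn, top_sup_eq, top_inf_eq]
      show Subgroup.map (QuotientGroup.mk' (G₁.subgroupOf G₀)) ((d n).subgroupOf G₀) = ⊤
      rw [hdn, Subgroup.subgroupOf_self]
      exact Subgroup.map_top_of_surjective _ (QuotientGroup.mk'_surjective _)
    · intro i hi
      obtain ⟨hle, hconj⟩ := hdchain i hi
      constructor
      · exact Subgroup.map_mono
          (fun x hx => Subgroup.mem_subgroupOf.mpr (hle (Subgroup.mem_subgroupOf.mp hx)))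
      · intro x hx h hh
        obtain ⟨y, hy, rfl⟩ := Subgroup.mem_map.mp hx
        obtain ⟨k, hk, rfl⟩ := Subgroup.mem_map.mp hh
        rw [← map_inv, ← map_mul, ← map_mul]
        refine Subgroup.mem_map_of_mem _ ?_
        refine Subgroup.mem_subgroupOf.mpr ?_
        have : ((y * k * y⁻¹ : ↥G₀) : G) = (y : G) * (k : G) * (y : G)⁻¹ := by
          push_cast; ring_nf
        rw [this]
        exact hconj _ (Subgroup.mem_subgroupOf.mp hy) _ (Subgroup.mem_subgroupOf.mp hk)
  have hKinert : Inert K := hhyp K (le_inf le_sup_right h01) inf_le_right hsubq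
  have hcomm : Subgroup.Commensurable (c 0) K :=
    (commensurable_sup_finite (c 0) G₁ hfin1).trans (commensurable_inf_of_index hfin0)
  exact inert_of_commensurable hcomm hKinert
end

section
/- Let G be a semidihedral group on a torsion-free abelian subgroup A of finite rank, and let H be a subnormal subgroup of G not contained in A, with h ∈ H \ A acting on A as the rational-power automorphism m/n with m/n ≠ 1. If H has subnormality defect i, then H contains A^((m−n)^i), and consequently |HA : H| is finite. -/
variable {G : Type*} [Group G]

section Aux

variable {Q : Type*} [CommGroup Q]

lemma aux_card_closure {e : ℕ} (he : 0 < e) (hQe : ∀ y : Q, y ^ e = 1) (S₁ : Finset Q) :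
    ((Subgroup.closure (S₁ : Set Q) : Set Q)).Finite ∧
      Nat.card (Subgroup.closure (S₁ : Set Q) : Set Q) ≤ e ^ S₁.card := by
  haveI : NeZero e := ⟨he.ne'⟩
  set t := S₁.card with ht
  set g : Fin t → Q := fun j => ((S₁.equivFin.symm j : S₁) : Q) with hg
  set φ : (Fin t → Fin e) → Q := fun v => ∏ j, g j ^ ((v j : ℕ)) with hφ
  have hsub : (Subgroup.closure (S₁ : Set Q) : Set Q) ⊆ Set.range φ := by
    intro x hx
    induction hx using Subgroup.closure_induction with
    | mem x hxk =>
      refine ⟨fun j => if j = S₁.equivFin ⟨x, hxk⟩ then ⟨1 % e, Nat.mod_lt 1 he⟩ else ⟨0, he⟩, ?_⟩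
      have : φ (fun j => if j = S₁.equivFin ⟨x, hxk⟩ then ⟨1 % e, Nat.mod_lt 1 he⟩ else ⟨0, he⟩)
          = g (S₁.equivFin ⟨x, hxk⟩) ^ (1 % e) := by
        simp only [hφ]
        rw [Finset.prod_eq_single (S₁.equivFin ⟨x, hxk⟩)]
        · simp
        · intro j _ hj; simp [hj]
        · intro hj; exact absurd (Finset.mem_univ _) hj
      rw [this, ← pow_eq_pow_mod 1 (hQe _), pow_one, hg]
      simp
    | one =>
      refine ⟨fun _ => ⟨0, he⟩, ?_⟩
      simp [hφ]
    | mul x y hx hy hpx hpy =>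
      obtain ⟨v, hv⟩ := hpx
      obtain ⟨w, hw⟩ := hpy
      refine ⟨v + w, ?_⟩
      have : φ (v + w) = φ v * φ w := by
        simp only [hφ, Pi.add_apply]
        rw [← Finset.prod_mul_distrib]
        refine Finset.prod_congr rfl fun j _ => ?_
        rw [Fin.val_add, ← pow_eq_pow_mod _ (hQe (g j)), pow_add]
      rw [this, hv, hw]
    | inv x hx hpx =>
      obtain ⟨v, hv⟩ := hpx
      refine ⟨-v, ?_⟩
      have : φ (-v) = (φ v)⁻¹ := by
        simp only [hφ, Pi.neg_apply]
        rw [← Finset.prod_inv_distrib]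
        refine Finset.prod_congr rfl fun j _ => ?_
        rw [Fin.coe_neg, ← pow_eq_pow_mod _ (hQe (g j))]
        refine eq_inv_of_mul_eq_one_left ?_
        rw [← pow_add]
        have : e - (v j : ℕ) + (v j : ℕ) = e := by have := (v j).isLt; omega
        rw [this, hQe]
      rw [this, hv]
  have hfin : ((Subgroup.closure (S₁ : Set Q) : Set Q)).Finite :=
    (Set.finite_range φ).subset hsub
  refine ⟨hfin, ?_⟩
  calc Nat.card (Subgroup.closure (S₁ : Set Q) : Set Q)
      ≤ Nat.card (Set.range φ) := Nat.card_mono (Set.finite_range φ) hsub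
    _ ≤ Nat.card (Fin t → Fin e) := by
        haveI : Finite (Fin t → Fin e) := inferInstance
        exact Nat.card_le_card_of_surjective (Set.rangeFactorization φ)
          Set.rangeFactorization_surjective
    _ = e ^ t := by simp [Nat.card_eq_fintype_card]

lemma aux_finite {e r : ℕ} (he : 0 < e) (hQe : ∀ y : Q, y ^ e = 1)
    (hgen : ∀ s : Finset Q, ∃ S₁ : Finset Q, S₁.card ≤ r ∧
      (s : Set Q) ⊆ (Subgroup.closure (S₁ : Set Q) : Set Q)) :
    Finite Q := by
  by_contra hinf
  rw [not_finite_iff_infinite] at hinf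
  obtain ⟨s, hs⟩ := Infinite.exists_subset_card_eq Q (e ^ r + 1)
  obtain ⟨S₁, hcard, hsub⟩ := hgen s
  obtain ⟨hfin, hle⟩ := aux_card_closure he hQe S₁
  have h1 : s.card ≤ Nat.card (Subgroup.closure (S₁ : Set Q) : Set Q) := by
    have := Nat.card_mono hfin hsub
    rwa [Nat.card_coe_set_eq, Set.ncard_coe_finset] at this
  have h2 : e ^ S₁.card ≤ e ^ r := Nat.pow_le_pow_right he hcard
  omega

end Aux

/-- In a semidihedral group `G` on a torsion-free abelian subgroup `A` of
finite rank, if `H` is subnormal of defect `i`, not contained in `A`, and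
`h ∈ H \ A` acts on `A` as the rational-power automorphism `m/n ≠ 1`, then
`A^((m-n)^i) ≤ H` and `|HA : H|` is finite. -/
theorem semidihedral_subnormal_contains_powers
    (A : Subgroup G) (hA : A.Normal) (hAbot : A ≠ ⊥)
    (hcomm : ∀ a ∈ A, ∀ b ∈ A, a * b = b * a)
    (htf : ∀ a ∈ A, a ≠ 1 → ¬ IsOfFinOrder a)
    (hinertial : ∀ g : G, ∀ X : Subgroup G, X ≤ A → Subgroup.Commensurable X (conjS g X))
    (hcent : Subgroup.centralizer (A : Set G) = A)
    (hrk : ∃ r : ℕ, ∀ B : Subgroup G, B ≤ A → B.FG →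
        ∃ S : Finset G, S.card ≤ r ∧ Subgroup.closure (S : Set G) = B)
    (H : Subgroup G) (i : ℕ)
    (c : ℕ → Subgroup G) (hc0 : c 0 = H) (hci : c i = ⊤) (hchain : SubnormalChain c i)
    (h : G) (hhH : h ∈ H) (hhA : h ∉ A)
    (m n : ℤ) (hco : IsCoprime m n) (hn : 0 < n) (hmn : m ≠ n)
    (haction : ∀ a ∈ A, (h⁻¹ * a * h) ^ n = a ^ m) :
    (∀ a ∈ A, a ^ ((m - n) ^ i) ∈ H) ∧ H.relIndex (H ⊔ A) ≠ 0 := by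
  classical
  obtain ⟨r, hr⟩ := hrk
  -- H is contained in every term of the chain
  have hHle : ∀ k, k ≤ i → H ≤ c k := by
    intro k
    induction k with
    | zero => intro _; exact hc0.ge
    | succ k ih =>
      intro hk
      exact le_trans (ih (by omega)) (hchain k (by omega)).1
  -- Key inductive step
  have key : ∀ j, j ≤ i → ∀ a ∈ A, a ^ ((m - n) ^ j) ∈ c (i - j) := by
    intro j
    induction j with
    | zero =>
      intro _ a _
      rw [Nat.sub_zero, hci]
      exact Subgroup.mem_top _
    | succ j ih =>
      intro hji a ha
      have hj : j ≤ i := by omega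
      set b := a ^ ((m - n) ^ j) with hb
      have hbA : b ∈ A := Subgroup.zpow_mem A ha _
      have hbc : b ∈ c (i - j) := ih hj a ha
      have hidx : i - j = (i - (j + 1)) + 1 := by omega
      have hhc : h ∈ c (i - (j + 1)) := hHle _ (by omega) hhH
      have hchain' := hchain (i - (j + 1)) (by omega)
      have h1 : b * h * b⁻¹ ∈ c (i - (j + 1)) := by
        refine hchain'.2 b ?_ h hhc
        rw [← hidx]; exact hbc
      have hz : b * h * b⁻¹ * h⁻¹ ∈ c (i - (j + 1)) := mul_mem h1 (inv_mem hhc)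
      have hwA : h * b⁻¹ * h⁻¹ ∈ A := hA.conj_mem _ (inv_mem hbA) h
      have hbn : (h * b * h⁻¹) ^ m = b ^ n := by
        have h2 := haction (h * b * h⁻¹) (hA.conj_mem b hbA h)
        have h3 : h⁻¹ * (h * b * h⁻¹) * h = b := by group
        rw [h3] at h2
        exact h2.symm
      have hw : (h * b⁻¹ * h⁻¹) ^ m = b ^ (-n) := by
        have h4 : h * b⁻¹ * h⁻¹ = (h * b * h⁻¹)⁻¹ := by group
        rw [h4, inv_zpow, hbn, ← zpow_neg]
      have hcom : Commute b (h * b⁻¹ * h⁻¹) := hcomm b hbA _ hwA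
      have hzm : (b * (h * b⁻¹ * h⁻¹)) ^ m = b ^ (m - n) := by
        rw [hcom.mul_zpow, hw, ← zpow_add]
        ring_nf
      have h5 : b ^ (m - n) ∈ c (i - (j + 1)) := by
        rw [← hzm]
        have : b * (h * b⁻¹ * h⁻¹) = b * h * b⁻¹ * h⁻¹ := by group
        rw [this]
        exact Subgroup.zpow_mem _ hz m
      rw [hb, ← zpow_mul, ← pow_succ] at h5
      exact h5
  have part1 : ∀ a ∈ A, a ^ ((m - n) ^ i) ∈ H := by
    intro a ha
    have := key i le_rfl a ha
    rwa [Nat.sub_self, hc0] at this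
  refine ⟨part1, ?_⟩
  -- Part 2
  set k : ℤ := (m - n) ^ i with hkdef
  have hk0 : k ≠ 0 := pow_ne_zero _ (sub_ne_zero.mpr hmn)
  set e : ℕ := k.natAbs with hedef
  have he : 0 < e := Int.natAbs_pos.mpr hk0
  have hpow : ∀ a ∈ A, a ^ (e : ℕ) ∈ H := by
    intro a ha
    have h1 := part1 a ha
    have h2 : a ^ ((e : ℕ) : ℤ) ∈ H := by
      rcases Int.natAbs_eq k with hk | hk
      · rw [← hk]; exact h1
      · have : ((e : ℕ) : ℤ) = -k := by omega
        rw [this, zpow_neg]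
        exact inv_mem h1
    rwa [zpow_natCast] at h2
  letI cg : CommGroup ↥A :=
    { (inferInstance : Group ↥A) with
      mul_comm := fun x y => Subtype.ext (hcomm x.1 x.2 y.1 y.2) }
  set S : Subgroup ↥A := H.subgroupOf A with hSdef
  set Q := ↥A ⧸ S with hQdef
  have hQe : ∀ y : Q, y ^ e = 1 := by
    intro y
    induction y using QuotientGroup.induction_on with
    | H a =>
      rw [← QuotientGroup.mk_pow]
      rw [QuotientGroup.eq_one_iff]
      show (a ^ e : ↥A) ∈ H.subgroupOf A
      rw [Subgroup.mem_subgroupOf]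
      push_cast
      exact hpow a a.2
  have hgen : ∀ s : Finset Q, ∃ S₁ : Finset Q, S₁.card ≤ r ∧
      (s : Set Q) ⊆ (Subgroup.closure (S₁ : Set Q) : Set Q) := by
    intro s
    have hsurj := QuotientGroup.mk'_surjective S
    set f : Q → ↥A := Function.surjInv hsurj with hfdef
    have hf : ∀ q, QuotientGroup.mk' S (f q) = q := fun q => Function.surjInv_eq hsurj q
    set T : Set G := (fun q => ((f q : ↥A) : G)) '' ↑s with hTdef
    have hTA : T ⊆ A := by rintro x ⟨q, _, rfl⟩; exact (f q).2
    have hTfin : T.Finite := s.finite_toSet.image _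
    have hBA : Subgroup.closure T ≤ A := (Subgroup.closure_le _).mpr hTA
    have hBfg : (Subgroup.closure T).FG := (Subgroup.fg_iff _).mpr ⟨T, rfl, hTfin⟩
    obtain ⟨S₀, hS₀card, hS₀⟩ := hr (Subgroup.closure T) hBA hBfg
    have hS₀le : Subgroup.closure (↑S₀ : Set G) ≤ A := le_of_eq_of_le hS₀ hBA
    have hS₀A : ∀ x ∈ S₀, x ∈ A := fun x hx => hS₀le (Subgroup.subset_closure hx)
    refine ⟨S₀.attach.image (fun x => QuotientGroup.mk' S (⟨x.1, hS₀A x.1 x.2⟩ : ↥A)), ?_, ?_⟩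
    · calc (S₀.attach.image _).card ≤ S₀.attach.card := Finset.card_image_le
        _ = S₀.card := Finset.card_attach
        _ ≤ r := hS₀card
    · intro q hq
      set S₁ : Finset Q := S₀.attach.image
        (fun x => QuotientGroup.mk' S (⟨x.1, hS₀A x.1 x.2⟩ : ↥A)) with hS₁def
      have hfqB : ((f q : ↥A) : G) ∈ Subgroup.closure (↑S₀ : Set G) := by
        rw [hS₀]
        exact Subgroup.subset_closure ⟨q, hq, rfl⟩
      have main : ∀ (x : G) (hx : x ∈ Subgroup.closure (↑S₀ : Set G)),
          ∀ hxA : x ∈ A, QuotientGroup.mk' S (⟨x, hxA⟩ : ↥A) ∈ Subgroup.closure (S₁ : Set Q) := by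
        intro x hx
        induction hx using Subgroup.closure_induction with
        | mem x hxk =>
          intro hxA
          apply Subgroup.subset_closure
          rw [hS₁def]
          simp only [Finset.coe_image, Set.mem_image, Finset.mem_coe, Finset.mem_attach]
          exact ⟨⟨x, hxk⟩, by simp⟩
        | one =>
          intro h1
          have : (⟨(1 : G), h1⟩ : ↥A) = 1 := rfl
          rw [this, map_one]
          exact Subgroup.one_mem _
        | mul x y hx hy hpx hpy =>
          intro hxyA
          have hxA : x ∈ A := hS₀le hx
          have hyA : y ∈ A := hS₀le hy
          have : (⟨x * y, hxyA⟩ : ↥A) = ⟨x, hxA⟩ * ⟨y, hyA⟩ := rfl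
          rw [this, map_mul]
          exact Subgroup.mul_mem _ (hpx hxA) (hpy hyA)
        | inv x hx hpx =>
          intro hxiA
          have hxA : x ∈ A := hS₀le hx
          have : (⟨x⁻¹, hxiA⟩ : ↥A) = (⟨x, hxA⟩ : ↥A)⁻¹ := rfl
          rw [this, map_inv]
          exact Subgroup.inv_mem _ (hpx hxA)
      have h6 := main _ hfqB (f q).2
      have h7 : (⟨((f q : ↥A) : G), (f q).2⟩ : ↥A) = f q := rfl
      rw [h7, hf q] at h6
      exact h6
  haveI hQfin : Finite Q := aux_finite he hQe hgen
  -- Transfer finiteness to the quotient of H ⊔ A by H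
  show (H.subgroupOf (H ⊔ A)).index ≠ 0
  set K : Subgroup G := H ⊔ A with hKdef
  have hAK : A ≤ K := le_sup_right
  set F : ↥A → (↥K ⧸ H.subgroupOf K) :=
    fun a => QuotientGroup.mk (⟨a.1, hAK a.2⟩ : ↥K) with hFdef
  have hcompat : ∀ a b : ↥A, (QuotientGroup.leftRel S) a b → F a = F b := by
    intro a b hab
    have hab' : a⁻¹ * b ∈ S := QuotientGroup.leftRel_apply.mp hab
    rw [hSdef, Subgroup.mem_subgroupOf] at hab'
    show QuotientGroup.mk _ = QuotientGroup.mk _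
    rw [QuotientGroup.eq, Subgroup.mem_subgroupOf]
    exact hab'
  set F' : Q → (↥K ⧸ H.subgroupOf K) := fun q => Quotient.liftOn' q F hcompat with hF'def
  have hsurjF' : Function.Surjective F' := by
    intro y
    induction y using QuotientGroup.induction_on with
    | H x =>
      have hx : (x : G) ∈ (↑(A ⊔ H) : Set G) := by
        rw [sup_comm] at hKdef
        rw [← hKdef]
        exact x.2
      rw [Subgroup.normal_mul] at hx
      obtain ⟨a, ha, h₀, hh₀, hprod⟩ := hx
      refine ⟨QuotientGroup.mk (⟨a, ha⟩ : ↥A), ?_⟩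
      show F (⟨a, ha⟩ : ↥A) = QuotientGroup.mk x
      rw [hFdef]
      rw [QuotientGroup.eq, Subgroup.mem_subgroupOf]
      show (a : G)⁻¹ * (x : G) ∈ H
      rw [← hprod]
      simpa using hh₀
  haveI : Finite (↥K ⧸ H.subgroupOf K) := Finite.of_surjective F' hsurjF'
  exact Subgroup.index_ne_zero_of_finite
end
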